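/- Let d ≥ 1 and let L = {L_i}_{i=1}^{d²} be a measure basis for d×d complex matrices with all weights l_i = tr L_i strictly positive, with Gram matrix G (G_{ij} = tr(L_i L_j)) and bias matrix A = diag(l_1,…,l_{d²}). Define √Φ := A^{1/2}(A^{1/2}G^{-1}A^{1/2})^{1/2}A^{-1/2}, where (A^{1/2}G^{-1}A^{1/2})^{1/2} is the unique positive semidefinite square root of the positive definite real matrix A^{1/2}G^{-1}A^{1/2}. Then (√Φ)² = AG^{-1}, and the principal Wigner basis F = PW(L) satisfies F_i = Σ_j [√Φ]_{ij} L_j for all i. -/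

import Mathlib

open Matrix BigOperators
open scoped ComplexOrder Kronecker

/-- A measure basis: a linearly independent family of `d²` Hermitian `d×d` complex
matrices summing to the identity, with nonnegative traces. -/
def IsMeasureBasis {d : ℕ} (L : Fin (d ^ 2) → Matrix (Fin d) (Fin d) ℂ) : Prop :=
  (∀ i, (L i).IsHermitian) ∧ LinearIndependent ℝ L ∧ (∑ i, L i) = 1 ∧ ∀ i, 0 ≤ ((L i).trace).re

/-- A Wigner basis: an orthogonal measure basis. -/
def IsWignerBasis {d : ℕ} (L : Fin (d ^ 2) → Matrix (Fin d) (Fin d) ℂ) : Prop :=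
  IsMeasureBasis L ∧ ∀ i j, i ≠ j → (L i * L j).trace = 0

/-- The rescaled frame operator `S_L(X) = ∑ⱼ (tr(X Lⱼ)/lⱼ) Lⱼ`. -/
noncomputable def rsFrameOp {n : Type*} [Fintype n] {m : Type*} [Fintype m] [DecidableEq m]
    (L : n → Matrix m m ℂ) (X : Matrix m m ℂ) : Matrix m m ℂ :=
  ∑ j, (((X * L j).trace) / ((L j).trace)) • L j

/-- A map on matrices that is ℝ-linear, Hermiticity-preserving, self-adjoint with respect to
the Hilbert–Schmidt inner product on Hermitian matrices, and positive. -/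
def IsPosSelfAdjMap {m : Type*} [Fintype m]
    (T : Matrix m m ℂ → Matrix m m ℂ) : Prop :=
  IsLinearMap ℝ T ∧ (∀ X, X.IsHermitian → (T X).IsHermitian) ∧
  (∀ X Y, X.IsHermitian → Y.IsHermitian → (T X * Y).trace = (X * T Y).trace) ∧
  (∀ X, X.IsHermitian → 0 ≤ ((X * T X).trace).re)

/-- `T` is the (unique) positive self-adjoint inverse square root of the rescaled frame
operator of `L`, i.e. `S_L ∘ T ∘ T = id` on Hermitian matrices; `PW(L) i = T (L i)`. -/
def IsInvSqrtOfFrameOp {n : Type*} [Fintype n] {m : Type*} [Fintype m] [DecidableEq m]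
    (L : n → Matrix m m ℂ) (T : Matrix m m ℂ → Matrix m m ℂ) : Prop :=
  IsPosSelfAdjMap T ∧ ∀ X : Matrix m m ℂ, X.IsHermitian → rsFrameOp L (T (T X)) = X

namespace SBAux

variable {m : Type*} [Fintype m]

lemma trace_mul_real {X Y : Matrix m m ℂ} (hX : X.IsHermitian) (hY : Y.IsHermitian) :
    (X * Y).trace = (((X * Y).trace).re : ℂ) := by
  have h : (starRingEnd ℂ) (X * Y).trace = (X * Y).trace := by
    rw [starRingEnd_apply, ← Matrix.trace_conjTranspose, Matrix.conjTranspose_mul, hX.eq, hY.eq,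
      Matrix.trace_mul_comm]
  exact (Complex.conj_eq_iff_re.mp h).symm

lemma trace_real {X : Matrix m m ℂ} (hX : X.IsHermitian) :
    X.trace = ((X.trace).re : ℂ) := by
  have h : (starRingEnd ℂ) X.trace = X.trace := by
    rw [starRingEnd_apply, ← Matrix.trace_conjTranspose, hX.eq]
  exact (Complex.conj_eq_iff_re.mp h).symm

omit [Fintype m] in
lemma isHermitian_sum_smul {n : Type*} [Fintype n] {L : n → Matrix m m ℂ}
    (hH : ∀ i, (L i).IsHermitian) (x : n → ℝ) : (∑ i, x i • L i).IsHermitian := by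
  unfold Matrix.IsHermitian
  rw [Matrix.conjTranspose_sum]
  refine Finset.sum_congr rfl fun i _ => ?_
  rw [Matrix.conjTranspose_smul, star_trivial, (hH i).eq]

lemma trace_self_mul_pos {X : Matrix m m ℂ} (hX : X.IsHermitian) (hne : X ≠ 0) :
    0 < ((X * X).trace).re := by
  have h : (X * X).trace = ∑ i, ∑ j, X i j * (starRingEnd ℂ) (X i j) := by
    nth_rewrite 1 [← hX.eq]
    simp only [Matrix.trace, Matrix.mul_apply, Matrix.diag, Matrix.conjTranspose_apply]
    rw [Finset.sum_comm]
    refine Finset.sum_congr rfl fun i _ => Finset.sum_congr rfl fun j _ => ?_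
    rw [mul_comm, starRingEnd_apply]
  have hre : ((X * X).trace).re = ∑ i, ∑ j, Complex.normSq (X i j) := by
    rw [h, Complex.re_sum]
    refine Finset.sum_congr rfl fun i _ => ?_
    rw [Complex.re_sum]
    exact Finset.sum_congr rfl fun j _ => by rw [Complex.mul_conj, Complex.ofReal_re]
  rw [hre]
  obtain ⟨i, hi⟩ : ∃ i, ∃ j, X i j ≠ 0 := by
    by_contra hc
    push_neg at hc
    exact hne (Matrix.ext fun i j => hc i j)
  obtain ⟨j, hj⟩ := hi
  refine Finset.sum_pos' (fun i _ => Finset.sum_nonneg fun j _ => Complex.normSq_nonneg _)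
    ⟨i, Finset.mem_univ i, Finset.sum_pos' (fun j _ => Complex.normSq_nonneg _)
      ⟨j, Finset.mem_univ j, Complex.normSq_pos.mpr hj⟩⟩

variable {n : Type*} [Fintype n]

omit [Fintype m] in
lemma coe_smul_matrix (r : ℝ) (M : Matrix m m ℂ) : (r : ℂ) • M = r • M := by
  rw [← Complex.coe_algebraMap, algebraMap_smul]

lemma trace_sum_smul_mul {L : n → Matrix m m ℂ} {G : Matrix n n ℝ}
    (hH : ∀ i, (L i).IsHermitian)
    (hG : ∀ i j, G i j = ((L i * L j).trace).re)
    (x : n → ℝ) (j : n) :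
    ((∑ i, x i • L i) * L j).trace = ((∑ i, x i * G i j : ℝ) : ℂ) := by
  rw [Matrix.sum_mul, Matrix.trace_sum]
  push_cast
  refine Finset.sum_congr rfl fun i _ => ?_
  rw [Matrix.smul_mul, Matrix.trace_smul, hG i j, ← trace_mul_real (hH i) (hH j)]
  exact Complex.real_smul

lemma gram_symm {L : n → Matrix m m ℂ} {G : Matrix n n ℝ}
    (hG : ∀ i j, G i j = ((L i * L j).trace).re) (i j : n) : G i j = G j i := by
  rw [hG, hG, Matrix.trace_mul_comm]

end SBAux

open SBAux in
/-- with `√Φ := A^{1/2}(A^{1/2}G⁻¹A^{1/2})^{1/2}A^{-1/2}` (where `B` is the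
unique positive semidefinite square root of `A^{1/2}G⁻¹A^{1/2}`), one has `(√Φ)² = AG⁻¹`
and the principal Wigner basis satisfies `Fᵢ = ∑ⱼ [√Φ]ᵢⱼ Lⱼ`. -/
theorem sqrt_born_matrix_gives_pw {d : ℕ} [NeZero d]
    (L : Fin (d ^ 2) → Matrix (Fin d) (Fin d) ℂ)
    (hL : IsMeasureBasis L) (hpos : ∀ i, 0 < ((L i).trace).re)
    (T : Matrix (Fin d) (Fin d) ℂ → Matrix (Fin d) (Fin d) ℂ)
    (hT : IsInvSqrtOfFrameOp L T)
    (G A Asq AsqInv B sqrtPhi : Matrix (Fin (d ^ 2)) (Fin (d ^ 2)) ℝ)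
    (hG : ∀ i j, G i j = ((L i * L j).trace).re)
    (hA : A = Matrix.diagonal fun i => ((L i).trace).re)
    (hAsq : Asq = Matrix.diagonal fun i => Real.sqrt (((L i).trace).re))
    (hAsqInv : AsqInv = Matrix.diagonal fun i => (Real.sqrt (((L i).trace).re))⁻¹)
    (hBpsd : B.PosSemidef) (hBsq : B * B = Asq * G⁻¹ * Asq)
    (hsqrtPhi : sqrtPhi = Asq * B * AsqInv) :
    sqrtPhi * sqrtPhi = A * G⁻¹ ∧
    ∀ i, T (L i) = ∑ j, (sqrtPhi i j) • L j := by
  obtain ⟨hHerm, hLI, hsum, _⟩ := hL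
  have hw0 : ∀ i, 0 < ((L i).trace).re := hpos
  have hsqrt_ne : ∀ i, Real.sqrt (((L i).trace).re) ≠ 0 :=
    fun i => ne_of_gt (Real.sqrt_pos.mpr (hw0 i))
  -- diagonal facts
  have hAsqInv_Asq : AsqInv * Asq = 1 := by
    rw [hAsqInv, hAsq, Matrix.diagonal_mul_diagonal, ← Matrix.diagonal_one]
    exact congrArg Matrix.diagonal (funext fun i => inv_mul_cancel₀ (hsqrt_ne i))
  have hAsq_AsqInv : Asq * AsqInv = 1 := by
    rw [hAsq, hAsqInv, Matrix.diagonal_mul_diagonal, ← Matrix.diagonal_one]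
    exact congrArg Matrix.diagonal (funext fun i => mul_inv_cancel₀ (hsqrt_ne i))
  have hAsq_sq : Asq * Asq = A := by
    rw [hAsq, hA, Matrix.diagonal_mul_diagonal]
    exact congrArg Matrix.diagonal (funext fun i => Real.mul_self_sqrt (le_of_lt (hw0 i)))
  -- Part 1
  have part1 : sqrtPhi * sqrtPhi = A * G⁻¹ := by
    rw [hsqrtPhi]
    calc Asq * B * AsqInv * (Asq * B * AsqInv)
        = Asq * B * (AsqInv * Asq) * B * AsqInv := by
          simp only [Matrix.mul_assoc]
      _ = Asq * (B * B) * AsqInv := by rw [hAsqInv_Asq]; simp only [Matrix.mul_assoc, Matrix.one_mul]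
      _ = Asq * Asq * G⁻¹ * (Asq * AsqInv) := by rw [hBsq]; simp only [Matrix.mul_assoc]
      _ = A * G⁻¹ := by rw [hAsq_AsqInv, hAsq_sq, Matrix.mul_one]
  refine ⟨part1, ?_⟩
  -- notation
  set w : Fin (d ^ 2) → ℝ := fun i => ((L i).trace).re with hwdef
  have hwne : ∀ i, w i ≠ 0 := fun i => ne_of_gt (hw0 i)
  have htrL : ∀ i, (L i).trace = ((w i : ℝ) : ℂ) := fun i => trace_real (hHerm i)
  have hGs : ∀ i j, G i j = G j i := gram_symm hG
  have hGH : G.IsHermitian := Matrix.IsHermitian.ext fun i j => by rw [star_trivial, hGs j i]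
  -- uniqueness of coefficients
  have huniq : ∀ x y : Fin (d ^ 2) → ℝ, (∑ i, x i • L i) = (∑ i, y i • L i) → x = y := by
    intro x y h
    have h0 : ∑ i, (x - y) i • L i = 0 := by
      simp only [Pi.sub_apply, sub_smul]
      rw [Finset.sum_sub_distrib, h, sub_self]
    have h1 := Fintype.linearIndependent_iff.mp hLI (x - y) h0
    funext i
    simpa [sub_eq_zero] using h1 i
  -- bilinear trace formula
  have htr2 : ∀ x y : Fin (d ^ 2) → ℝ, ((∑ i, x i • L i) * (∑ j, y j • L j)).trace
      = ((∑ j, y j * ∑ i, x i * G i j : ℝ) : ℂ) := by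
    intro x y
    rw [Matrix.mul_sum, Matrix.trace_sum]
    push_cast
    refine Finset.sum_congr rfl fun j _ => ?_
    rw [Matrix.mul_smul, Matrix.trace_smul, trace_sum_smul_mul hHerm hG x j,
      Complex.real_smul]
    push_cast
    ring
  -- G is positive definite
  have hGpd : G.PosDef := by
    refine Matrix.posDef_iff_dotProduct_mulVec.mpr ⟨hGH, fun x hx => ?_⟩
    have hXh := isHermitian_sum_smul hHerm x
    have hXne : (∑ i, x i • L i) ≠ 0 := by
      intro h0
      exact hx (funext fun i => Fintype.linearIndependent_iff.mp hLI x h0 i)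
    have hpos' := trace_self_mul_pos hXh hXne
    have hform : ((((∑ i, x i • L i)) * (∑ j, x j • L j)).trace).re = star x ⬝ᵥ (G *ᵥ x) := by
      rw [htr2 x x, Complex.ofReal_re]
      simp only [star_trivial, dotProduct, Matrix.mulVec, Finset.mul_sum]
      rw [Finset.sum_comm]
      exact Finset.sum_congr rfl fun i _ => Finset.sum_congr rfl fun j _ => by ring
    rw [← hform]
    exact hpos'
  have hGdet : IsUnit G.det := isUnit_iff_ne_zero.mpr (ne_of_gt hGpd.det_pos)
  have hGinvG : G⁻¹ * G = 1 := Matrix.nonsing_inv_mul G hGdet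
  have hGGinv : G * G⁻¹ = 1 := Matrix.mul_nonsing_inv G hGdet
  have hGinvpd : G⁻¹.PosDef := hGpd.inv
  -- explicit form of the rescaled frame operator
  have hS : ∀ Z : Matrix (Fin d) (Fin d) ℂ, Z.IsHermitian →
      rsFrameOp L Z = ∑ j, ((((Z * L j).trace).re / w j) • L j) := by
    intro Z hZ
    unfold rsFrameOp
    refine Finset.sum_congr rfl fun j _ => ?_
    rw [trace_mul_real hZ (hHerm j), htrL j, ← Complex.ofReal_div, coe_smul_matrix,
      Complex.ofReal_re]
  obtain ⟨⟨hlin, hherm, hadj, hposT⟩, hinv⟩ := hT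
  have hTlin : ∀ x : Fin (d ^ 2) → ℝ, T (∑ i, x i • L i) = ∑ i, x i • T (L i) := by
    intro x
    have h := map_sum (IsLinearMap.mk' T hlin) (fun i => x i • L i) Finset.univ
    simpa only [_root_.map_smul, IsLinearMap.mk'_apply] using h
  have hTh : ∀ i, (T (L i)).IsHermitian := fun i => hherm _ (hHerm i)
  have hTTh : ∀ i, (T (T (L i))).IsHermitian := fun i => hherm _ (hTh i)
  have hTTTh : ∀ i, (T (T (T (L i)))).IsHermitian := fun i => hherm _ (hTTh i)
  -- the coefficient matrix of T in the basis L
  set M : Matrix (Fin (d ^ 2)) (Fin (d ^ 2)) ℝ :=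
    Matrix.of fun i j => ((T (T (T (L i))) * L j).trace).re / w j with hMdef
  have hM : ∀ i, T (L i) = ∑ j, M i j • L j := by
    intro i
    have h := hinv (T (L i)) (hTh i)
    rw [← h, hS _ (hTTTh i)]
    rfl
  have hTcomb : ∀ x : Fin (d ^ 2) → ℝ, T (∑ i, x i • L i) = ∑ j, (∑ i, x i * M i j) • L j := by
    intro x
    rw [hTlin]
    calc ∑ i, x i • T (L i) = ∑ i, x i • ∑ j, M i j • L j := by
          exact Finset.sum_congr rfl fun i _ => by rw [hM i]
      _ = ∑ i, ∑ j, (x i * M i j) • L j := by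
          exact Finset.sum_congr rfl fun i _ => by rw [Finset.smul_sum]; simp [smul_smul]
      _ = ∑ j, ∑ i, (x i * M i j) • L j := Finset.sum_comm
      _ = ∑ j, (∑ i, x i * M i j) • L j := by
          exact Finset.sum_congr rfl fun j _ => by rw [Finset.sum_smul]
  -- M * M * G = A
  have hMMG : M * M * G = A := by
    have key : ∀ i, (fun j => ((M * M * G) i j / w j)) = (fun j => if i = j then (1 : ℝ) else 0) := by
      intro i
      apply huniq
      have h1 : T (T (L i)) = ∑ k, ((M * M) i k) • L k := by
        rw [hM i, hTcomb]
        exact Finset.sum_congr rfl fun k _ => by rw [Matrix.mul_apply]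
      have h2 : rsFrameOp L (∑ k, (M * M) i k • L k) = L i := by
        rw [← h1]
        exact hinv (L i) (hHerm i)
      rw [hS _ (isHermitian_sum_smul hHerm _)] at h2
      have h3 : ∀ j, (((∑ k, (M * M) i k • L k) * L j).trace).re = (M * M * G) i j := by
        intro j
        rw [trace_sum_smul_mul hHerm hG, Complex.ofReal_re, ← Matrix.mul_apply,
          Matrix.mul_assoc]
      simp only [h3] at h2
      rw [h2]
      simp
    apply Matrix.ext
    intro i j
    have h : (M * M * G) i j / w j = if i = j then (1 : ℝ) else 0 := congrFun (key i) j
    rw [div_eq_iff (hwne j)] at h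
    rw [h, hA, Matrix.diagonal_apply]
    by_cases hij : i = j
    · subst hij; simp
    · simp [hij]
  -- M * G is symmetric
  have hMGsym : ∀ i j, (M * G) i j = (M * G) j i := by
    intro i j
    have h := hadj (L i) (L j) (hHerm i) (hHerm j)
    rw [hM i, hM j, trace_sum_smul_mul hHerm hG, Matrix.trace_mul_comm,
      trace_sum_smul_mul hHerm hG] at h
    have h' := Complex.ofReal_inj.mp h
    rw [Matrix.mul_apply, Matrix.mul_apply]
    rw [h']
  have hMGH : (M * G).IsHermitian := Matrix.IsHermitian.ext fun i j => by
    rw [star_trivial, hMGsym j i]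
  -- M * G is positive semidefinite
  have hMGpsd : (M * G).PosSemidef := by
    refine Matrix.posSemidef_iff_dotProduct_mulVec.mpr ⟨hMGH, fun x => ?_⟩
    have hXh := isHermitian_sum_smul hHerm x
    have hp := hposT _ hXh
    rw [hTcomb x, htr2 x (fun j => ∑ i, x i * M i j), Complex.ofReal_re] at hp
    have hform : star x ⬝ᵥ ((M * G) *ᵥ x)
        = ∑ j, (∑ i, x i * M i j) * (∑ k, x k * G k j) := by
      simp only [star_trivial, dotProduct, Matrix.mulVec, Matrix.mul_apply,
        Finset.sum_mul, Finset.mul_sum]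
      have hterm : ∀ a b c, x a * (M a c * G c b * x b) = x a * M a c * (x b * G b c) := by
        intro a b c
        rw [hGs c b]
        ring
      simp only [hterm]
      calc ∑ a, ∑ b, ∑ c, x a * M a c * (x b * G b c)
          = ∑ a, ∑ c, ∑ b, x a * M a c * (x b * G b c) :=
            Finset.sum_congr rfl fun a _ => Finset.sum_comm
        _ = ∑ c, ∑ a, ∑ b, x a * M a c * (x b * G b c) := Finset.sum_comm
        _ = ∑ c, ∑ b, ∑ a, x a * M a c * (x b * G b c) :=
            Finset.sum_congr rfl fun c _ => Finset.sum_comm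
    rw [hform]
    exact hp
  -- determinants / invertibility
  have hAsqdet : IsUnit Asq.det := by
    rw [hAsq, Matrix.det_diagonal]
    exact isUnit_iff_ne_zero.mpr (Finset.prod_ne_zero_iff.mpr fun i _ => hsqrt_ne i)
  have hGinvdet : IsUnit G⁻¹.det := isUnit_iff_ne_zero.mpr (ne_of_gt hGinvpd.det_pos)
  have hBdet : IsUnit B.det := by
    have h : B.det * B.det = Asq.det * G⁻¹.det * Asq.det := by
      rw [← Matrix.det_mul, hBsq, Matrix.det_mul, Matrix.det_mul]
    have h2 : IsUnit (B.det * B.det) := by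
      rw [h]
      exact (hAsqdet.mul hGinvdet).mul hAsqdet
    exact isUnit_of_mul_isUnit_left h2
  have hBBinv : B * B⁻¹ = 1 := Matrix.mul_nonsing_inv B hBdet
  have hAsqInv_eq : Asq⁻¹ = AsqInv := Matrix.inv_eq_left_inv hAsqInv_Asq
  have hBBinv_eq : (B * B)⁻¹ = AsqInv * (G * AsqInv) := by
    rw [hBsq, Matrix.mul_inv_rev, Matrix.mul_inv_rev,
      Matrix.nonsing_inv_nonsing_inv G hGdet, hAsqInv_eq]
  have hGeq : Asq * (B * B)⁻¹ * Asq = G := by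
    rw [hBBinv_eq]
    calc Asq * (AsqInv * (G * AsqInv)) * Asq
        = (Asq * AsqInv) * (G * (AsqInv * Asq)) := by simp only [Matrix.mul_assoc]
      _ = G := by rw [hAsq_AsqInv, hAsqInv_Asq, Matrix.one_mul, Matrix.mul_one]
  have hBinvsq : (B * B)⁻¹ = B⁻¹ * B⁻¹ := Matrix.mul_inv_rev B B
  -- sqrtPhi * G = Asq * B⁻¹ * Asq
  have hQ : sqrtPhi * G = Asq * B⁻¹ * Asq := by
    rw [hsqrtPhi, ← hGeq, hBinvsq]
    calc Asq * B * AsqInv * (Asq * (B⁻¹ * B⁻¹) * Asq)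
        = Asq * (B * ((AsqInv * Asq) * (B⁻¹ * (B⁻¹ * Asq)))) := by simp only [Matrix.mul_assoc]
      _ = Asq * ((B * B⁻¹) * (B⁻¹ * Asq)) := by
          rw [hAsqInv_Asq, Matrix.one_mul]
          simp only [Matrix.mul_assoc]
      _ = Asq * B⁻¹ * Asq := by rw [hBBinv, Matrix.one_mul, Matrix.mul_assoc]
  have hAsqH : Asqᴴ = Asq := by
    rw [hAsq, Matrix.diagonal_conjTranspose]
    simp
  have hQpsd : (sqrtPhi * G).PosSemidef := by
    rw [hQ]
    have h := (hBpsd.inv).mul_mul_conjTranspose_same Asq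
    rwa [hAsqH] at h
  have hQsqG : sqrtPhi * sqrtPhi * G = A := by
    rw [part1, Matrix.mul_assoc, hGinvG, Matrix.mul_one]
  -- uniqueness of the positive square root
  have hRpsd := hGinvpd.posSemidef
  open scoped MatrixOrder in
  set R := CFC.sqrt G⁻¹ with hRdef
  open scoped MatrixOrder in
  have hRR : R * R = G⁻¹ := CFC.sqrt_mul_sqrt_self _ hRpsd.nonneg
  open scoped MatrixOrder in
  have hRH : Rᴴ = R := (CFC.sqrt_nonneg G⁻¹).posSemidef.isHermitian.eq
  have hRdet : IsUnit R.det := by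
    have h2 : IsUnit (R.det * R.det) := by rw [← Matrix.det_mul, hRR]; exact hGinvdet
    exact isUnit_of_mul_isUnit_left h2
  have hRRinv : R * R⁻¹ = 1 := Matrix.mul_nonsing_inv R hRdet
  have hRinvR : R⁻¹ * R = 1 := Matrix.nonsing_inv_mul R hRdet
  have hsq : ∀ N : Matrix (Fin (d ^ 2)) (Fin (d ^ 2)) ℝ, N * N * G = A →
      (R * (N * G) * R) ^ 2 = R * A * R := by
    intro N hNA
    have h1 : N * G * G⁻¹ * (N * G) = A := by
      calc N * G * G⁻¹ * (N * G) = N * ((G * G⁻¹) * (N * G)) := by simp only [Matrix.mul_assoc]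
        _ = N * N * G := by rw [hGGinv, Matrix.one_mul, ← Matrix.mul_assoc]
        _ = A := hNA
    calc (R * (N * G) * R) ^ 2
        = R * ((N * G) * ((R * R) * ((N * G) * R))) := by
          rw [pow_two (R * (N * G) * R)]
          simp only [Matrix.mul_assoc]
      _ = R * (N * G * G⁻¹ * (N * G)) * R := by rw [hRR]; simp only [Matrix.mul_assoc]
      _ = R * A * R := by rw [h1]
  have hP1 := hsq M hMMG
  have hP2 := hsq sqrtPhi hQsqG
  have hpsd1 : (R * (M * G) * R).PosSemidef := by
    have h := hMGpsd.mul_mul_conjTranspose_same R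
    rwa [hRH] at h
  have hpsd2 : (R * (sqrtPhi * G) * R).PosSemidef := by
    have h := hQpsd.mul_mul_conjTranspose_same R
    rwa [hRH] at h
  have heq : R * (M * G) * R = R * (sqrtPhi * G) * R :=
    open scoped MatrixOrder in
    (CFC.sq_eq_sq_iff _ _ hpsd1.nonneg hpsd2.nonneg).mp (by rw [hP1, hP2])
  have hMGQ : M * G = sqrtPhi * G := by
    calc M * G = (R⁻¹ * R) * (M * G) * (R * R⁻¹) := by
          rw [hRinvR, hRRinv, Matrix.one_mul, Matrix.mul_one]
      _ = R⁻¹ * ((R * (M * G) * R) * R⁻¹) := by simp only [Matrix.mul_assoc]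
      _ = R⁻¹ * ((R * (sqrtPhi * G) * R) * R⁻¹) := by rw [heq]
      _ = (R⁻¹ * R) * (sqrtPhi * G) * (R * R⁻¹) := by simp only [Matrix.mul_assoc]
      _ = sqrtPhi * G := by rw [hRinvR, hRRinv, Matrix.one_mul, Matrix.mul_one]
  have hMeq : M = sqrtPhi := by
    calc M = M * (G * G⁻¹) := by rw [hGGinv, Matrix.mul_one]
      _ = (M * G) * G⁻¹ := by rw [Matrix.mul_assoc]
      _ = (sqrtPhi * G) * G⁻¹ := by rw [hMGQ]
      _ = sqrtPhi * (G * G⁻¹) := by rw [Matrix.mul_assoc]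
      _ = sqrtPhi := by rw [hGGinv, Matrix.mul_one]
  intro i
  rw [hM i, hMeq]
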